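/- For f(x) = (b + 4a)x³/(1 - a x⁴) with b = 5a and g(x) = (x - (4/5)a x⁵)(1 - a x⁴), the identity f(x)g(x) + g'(x) = 1 holds for all x with a x⁴ ≠ 1. -/

import Mathlib

/-- For f(x) = (5a+4a)x³/(1-ax⁴) and g(x) = (x-(4/5)ax⁵)(1-ax⁴),
f·g + g' = 1 wherever ax⁴ ≠ 1. -/
theorem stmt_7 (a : ℝ) :
    ∀ x : ℝ, a * x ^ 4 ≠ 1 →
      ((5 * a + 4 * a) * x ^ 3 / (1 - a * x ^ 4)) *
        ((x - (4/5) * a * x ^ 5) * (1 - a * x ^ 4))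
      + deriv (fun x' : ℝ => (x' - (4/5) * a * x' ^ 5) * (1 - a * x' ^ 4)) x = 1 := by
  intro x hx
  have hne : 1 - a * x ^ 4 ≠ 0 := sub_ne_zero.mpr (Ne.symm hx)
  have hd : deriv (fun x' : ℝ => (x' - (4/5) * a * x' ^ 5) * (1 - a * x' ^ 4)) x
      = (1 - (4/5) * a * (5 * x ^ 4)) * (1 - a * x ^ 4)
        + (x - (4/5) * a * x ^ 5) * (-(a * (4 * x ^ 3))) := by
    have h1 : HasDerivAt (fun x' : ℝ => x' - (4/5) * a * x' ^ 5)
        (1 - (4/5) * a * (5 * x ^ 4)) x := by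
      have := (hasDerivAt_id x).sub (((hasDerivAt_pow 5 x).const_mul ((4/5) * a)))
      simp at this
      exact this
    have h2 : HasDerivAt (fun x' : ℝ => 1 - a * x' ^ 4) (-(a * (4 * x ^ 3))) x := by
      have := (hasDerivAt_const x (1:ℝ)).sub (((hasDerivAt_pow 4 x).const_mul a))
      simp at this
      exact this
    have := (h1.mul h2).deriv
    exact this
  rw [hd]
  field_simp
  ring
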